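/- Let $b, m > 0$ and $h \ge h^*$. Then $g_h(t_h) \le \lim_{t\to\infty} g_h(t) = \frac{h^{2b+1}}{2b+1}$, where $t_h$ is the smaller solution of $t^2(h-t)^{2b} = m^2$ in $(0,h)$ and $g_h(t) = \frac{m^2}{t} + \frac{h^{2b+1} - (h-\min\{h,t\})^{2b+1}}{2b+1}$. -/

import Mathlib

lemma aux_strictMono (b h : ℝ) (hb : 0 < b) (h0 : 0 < h) :
    StrictMonoOn (fun s : ℝ => s * (h - s) ^ b) (Set.Icc 0 (h/(b+1))) := by
  have hb1 : (0:ℝ) < b + 1 := by linarith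
  have hpos : ∀ s ∈ Set.Icc (0:ℝ) (h/(b+1)), 0 < h - s := by
    intro s hs
    have h2 : s ≤ h/(b+1) := hs.2
    have : h/(b+1) < h := by
      rw [div_lt_iff₀ hb1]; nlinarith
    linarith
  apply strictMonoOn_of_deriv_pos (convex_Icc _ _)
  · apply ContinuousOn.mul continuousOn_id
    apply ContinuousOn.rpow_const (by fun_prop)
    intro s hs
    exact Or.inl (by have := hpos s hs; intro hc; rw [hc] at this; linarith)
  · intro s hs
    rw [interior_Icc] at hs
    have hs0 : 0 < s := hs.1
    have hs1 := hs.2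
    rw [lt_div_iff₀ hb1] at hs1
    have hsd : 0 < h - s - b * s := by nlinarith
    have hhs : 0 < h - s := by nlinarith
    have hd : HasDerivAt (fun s : ℝ => s * (h - s) ^ b)
        (1 * (h - s) ^ b + s * ((0 - 1) * b * (h - s) ^ (b - 1))) s := by
      have inner : HasDerivAt (fun x : ℝ => h - x) (0 - 1) s :=
        (hasDerivAt_const s h).sub (hasDerivAt_id s)
      exact (hasDerivAt_id s).mul (inner.rpow_const (Or.inl (ne_of_gt hhs)))
    rw [hd.deriv]
    have key : (h - s) ^ b = (h - s) ^ (b - 1) * (h - s) := by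
      rw [← Real.rpow_add_one (ne_of_gt hhs)]; ring_nf
    have hp : 0 < (h - s) ^ (b - 1) := Real.rpow_pos_of_pos hhs _
    rw [key]; nlinarith

/-- For h ≥ h^*, g_h(t_h) ≤ lim_{t→∞} g_h(t) = h^{2b+1}/(2b+1). -/
theorem g_th_le_limit (b m h t : ℝ) (hb : 0 < b) (hm : 0 < m)
    (hh : (2*b+2) / (2*b+1) ^ (b/(b+1)) * m ^ (1/(b+1)) ≤ h)
    (ht : 0 < t) (ht' : t < h/(b+1)) (he : t^2 * (h - t) ^ (2*b) = m^2) :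
    m^2 / t + (h ^ (2*b+1) - (h - min h t) ^ (2*b+1)) / (2*b+1) ≤
      h ^ (2*b+1) / (2*b+1) ∧
    Filter.Tendsto (fun s : ℝ =>
        m^2 / s + (h ^ (2*b+1) - (h - min h s) ^ (2*b+1)) / (2*b+1))
      Filter.atTop (nhds (h ^ (2*b+1) / (2*b+1))) := by
  have hb1 : (0:ℝ) < b + 1 := by linarith
  have hb2 : (0:ℝ) < 2*b + 1 := by linarith
  have hb3 : (0:ℝ) < 2*b + 2 := by linarith
  have hApos : 0 < (2*b+2) / (2*b+1) ^ (b/(b+1)) * m ^ (1/(b+1)) := by positivity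
  have h0 : 0 < h := lt_of_lt_of_le hApos hh
  have hth : t < h := lt_of_lt_of_le ht' (by
    rw [div_le_iff₀ hb1]; nlinarith)
  have hht : 0 < h - t := by linarith
  have hmin : min h t = t := min_eq_right hth.le
  -- f(t) = m
  have hft : t * (h - t) ^ b = m := by
    have hsq : (t * (h - t) ^ b)^2 = m^2 := by
      rw [mul_pow, ← Real.rpow_natCast ((h-t)^b) 2, ← Real.rpow_mul hht.le]
      rw [show b * (2:ℕ) = 2*b by push_cast; ring]
      exact he
    have hp : 0 < t * (h - t) ^ b := mul_pos ht (Real.rpow_pos_of_pos hht _)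
    nlinarith
  -- h^(b+1) ≥ (2b+2)^(b+1) * m / (2b+1)^b
  have hA : (2*b+2) ^ (b+1) * m / (2*b+1) ^ b ≤ h ^ (b+1) := by
    have := Real.rpow_le_rpow hApos.le hh hb1.le
    rw [Real.mul_rpow (by positivity) (by positivity),
        Real.div_rpow (by positivity) (by positivity),
        ← Real.rpow_mul (by positivity), ← Real.rpow_mul hm.le,
        div_mul_cancel₀ _ (ne_of_gt hb1), one_div,
        inv_mul_cancel₀ (ne_of_gt hb1), Real.rpow_one] at this
    calc (2*b+2) ^ (b+1) * m / (2*b+1) ^ b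
        = (2*b+2) ^ (b+1) / (2*b+1) ^ b * m := by ring
      _ ≤ h ^ (b+1) := this
  -- m ≤ f(c) where c = h/(2b+2)
  set c : ℝ := h / (2*b+2) with hc
  have hc0 : 0 < c := by positivity
  have hhc : h - c = h * (2*b+1) / (2*b+2) := by rw [hc, eq_div_iff hb3.ne', sub_mul, div_mul_cancel₀ _ hb3.ne']; ring
  have hfcm : m ≤ c * (h - c) ^ b := by
    have h1 : (h - c) ^ b = h ^ b * (2*b+1) ^ b / (2*b+2) ^ b := by
      rw [hhc, Real.div_rpow (by positivity) hb3.le,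
          Real.mul_rpow h0.le hb2.le]
    have h2 : c * (h - c) ^ b = h ^ (b+1) * (2*b+1) ^ b / (2*b+2) ^ (b+1) := by
      rw [h1, hc, Real.rpow_add_one (ne_of_gt h0), Real.rpow_add_one (ne_of_gt hb3)]
      field_simp
    rw [h2, le_div_iff₀ (by positivity)]
    rw [div_le_iff₀ (by positivity)] at hA
    linarith
  -- key : (2b+2) t ≤ h, i.e. t ≤ c
  have key : t ≤ c := by
    by_contra hk
    push_neg at hk
    have hcI : c ∈ Set.Icc 0 (h/(b+1)) := by
      constructor
      · exact hc0.le
      · rw [hc, div_le_div_iff₀ hb3 hb1]; nlinarith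
    have htI : t ∈ Set.Icc 0 (h/(b+1)) := ⟨ht.le, ht'.le⟩
    have := aux_strictMono b h hb h0 hcI htI hk
    simp only at this
    rw [hft] at this
    linarith
  have key' : (2*b+1) * t ≤ h - t := by
    rw [hc, le_div_iff₀ hb3] at key; nlinarith
  constructor
  · -- main inequality
    rw [hmin]
    have hQ : 0 < (h - t) ^ (2*b) := Real.rpow_pos_of_pos hht _
    have hrw : (h - t) ^ (2*b+1) = (h - t) ^ (2*b) * (h - t) :=
      Real.rpow_add_one (ne_of_gt hht) _
    have hmain : m^2 / t ≤ (h - t) ^ (2*b+1) / (2*b+1) := by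
      rw [div_le_div_iff₀ ht hb2, hrw, ← he]
      have h1 : t * (h - t)^(2*b) * ((2*b+1) * t) ≤ t * (h - t)^(2*b) * (h - t) :=
        mul_le_mul_of_nonneg_left key' (by positivity)
      nlinarith
    have hsd := sub_div (h^(2*b+1)) ((h-t)^(2*b+1)) (2*b+1)
    linarith
  · -- the limit
    have heq : (fun s : ℝ => m^2 / s + h ^ (2*b+1) / (2*b+1)) =ᶠ[Filter.atTop]
        (fun s : ℝ => m^2 / s + (h ^ (2*b+1) - (h - min h s) ^ (2*b+1)) / (2*b+1)) := by
      filter_upwards [Filter.eventually_ge_atTop h] with s hs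
      rw [min_eq_left hs, sub_self, Real.zero_rpow (ne_of_gt hb2), sub_zero]
    apply Filter.Tendsto.congr' heq
    have h1 : Filter.Tendsto (fun s : ℝ => m^2 / s) Filter.atTop (nhds 0) :=
      tendsto_const_nhds.div_atTop Filter.tendsto_id
    have := h1.add (tendsto_const_nhds (x := h ^ (2*b+1) / (2*b+1)) (f := Filter.atTop))
    simpa using this
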